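/- For every integer k ≥ 0 the function τ ↦ p_k(τ) agrees on all of ℂ with a polynomial in τ of degree exactly 3k; in particular, p_0(τ) = 1 for all τ ∈ ℂ. -/

import Mathlib

open Complex Polynomial

noncomputable def pFun (k : ℕ) (τ : ℂ) : ℂ :=
  (2 * Real.pi * Complex.I)⁻¹ *
    ∮ t in C(0, (‖τ‖ ^ 3 + 1)⁻¹),
      Complex.exp (∑' n : ℕ,
        (1 / ((n : ℂ) + 1) - τ ^ 2 / ((n : ℂ) + 3)) * (-τ * t) ^ (n + 1)) / t ^ (k + 1)

namespace PFunAux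

/-- The `t^(m+1)` coefficient, as a polynomial in `τ`. -/
noncomputable def Q (m : ℕ) : Polynomial ℂ :=
  (C (((m : ℂ) + 1)⁻¹) - C (((m : ℂ) + 3)⁻¹) * X ^ 2) * (-X) ^ (m + 1)

noncomputable def D : ℕ → Polynomial ℂ
  | 0 => 0
  | m + 1 => Q m

/-- The candidate polynomial for `p_k`. -/
noncomputable def P (k : ℕ) : Polynomial ℂ :=
  ∑ c : Composition k, C ((c.length.factorial : ℂ)⁻¹) * ∏ i, D (c.blocksFun i)

/-- The power series of the inner function, in `t`, with coefficients evaluated at `τ`. -/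
noncomputable def G (τ : ℂ) : FormalMultilinearSeries ℂ ℂ ℂ :=
  FormalMultilinearSeries.ofScalars ℂ (fun n => (D n).eval τ)

lemma eval_D_norm_le (τ : ℂ) (n : ℕ) :
    ‖(D n).eval τ‖ ≤ (1 + ‖τ‖ ^ 2) * ‖τ‖ ^ n := by
  cases n with
  | zero => simp [D]; positivity
  | succ m =>
      have h1 : (1:ℝ) ≤ ‖((m : ℂ) + 1)‖ := by
        have : ((m : ℂ) + 1) = ((m + 1 : ℕ) : ℂ) := by push_cast; ring
        rw [this, Complex.norm_natCast]
        exact_mod_cast Nat.one_le_iff_ne_zero.2 (Nat.succ_ne_zero m)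
      have h3 : (1:ℝ) ≤ ‖((m : ℂ) + 3)‖ := by
        have : ((m : ℂ) + 3) = ((m + 3 : ℕ) : ℂ) := by push_cast; ring
        rw [this, Complex.norm_natCast]
        exact_mod_cast Nat.le_add_left 1 (m+2)
      have : (D (m+1)).eval τ
          = (((m : ℂ) + 1)⁻¹ - ((m : ℂ) + 3)⁻¹ * τ ^ 2) * (-τ) ^ (m + 1) := by
        simp [D, Q]
      rw [this]
      rw [norm_mul, norm_pow, norm_neg]
      gcongr
      calc ‖((m : ℂ) + 1)⁻¹ - ((m : ℂ) + 3)⁻¹ * τ ^ 2‖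
          ≤ ‖((m : ℂ) + 1)⁻¹‖ + ‖((m : ℂ) + 3)⁻¹ * τ ^ 2‖ := norm_sub_le _ _
        _ ≤ 1 + ‖τ‖ ^ 2 := by
            gcongr
            · rw [norm_inv]
              exact inv_le_one_of_one_le₀ h1
            · rw [norm_mul, norm_inv, norm_pow]
              calc ‖((m : ℂ) + 3)‖⁻¹ * ‖τ‖ ^ 2
                  ≤ 1 * ‖τ‖ ^ 2 := by
                    gcongr
                    exact inv_le_one_of_one_le₀ h3
                _ = ‖τ‖ ^ 2 := one_mul _

lemma le_radius_G (τ : ℂ) {s : NNReal} (hs : (s : ℝ) * ‖τ‖ ≤ 1) :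
    (s : ENNReal) ≤ (G τ).radius := by
  apply FormalMultilinearSeries.le_radius_of_bound _ (1 + ‖τ‖ ^ 2)
  intro n
  have hnorm : ‖G τ n‖ = ‖(D n).eval τ‖ :=
    FormalMultilinearSeries.ofScalars_norm (𝕜 := ℂ) ℂ _ n
  rw [hnorm]
  calc ‖(D n).eval τ‖ * (s : ℝ) ^ n
      ≤ ((1 + ‖τ‖ ^ 2) * ‖τ‖ ^ n) * (s : ℝ) ^ n := by
        gcongr
        exact eval_D_norm_le τ n
    _ = (1 + ‖τ‖ ^ 2) * ((s : ℝ) * ‖τ‖) ^ n := by ring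
    _ ≤ (1 + ‖τ‖ ^ 2) * 1 := by
        gcongr
        exact pow_le_one₀ (by positivity) hs
    _ = 1 + ‖τ‖ ^ 2 := mul_one _

end PFunAux

namespace PFunAux2
open PFunAux

noncomputable def rr (τ : ℂ) : ℝ := (‖τ‖ ^ 3 + 1)⁻¹
noncomputable def ss (τ : ℂ) : ℝ :=
  rr τ + (1 - rr τ * ‖τ‖) / (‖τ‖ + 1)

lemma abs_lt_cube (τ : ℂ) : ‖τ‖ < ‖τ‖ ^ 3 + 1 := by
  have ha : (0:ℝ) ≤ ‖τ‖ := norm_nonneg τ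
  nlinarith [mul_nonneg ha (sq_nonneg (‖τ‖ - 1)), sq_nonneg (2 * ‖τ‖ - 1)]

lemma rr_pos (τ : ℂ) : 0 < rr τ := by
  have ha : (0:ℝ) ≤ ‖τ‖ := norm_nonneg τ
  rw [rr]; positivity

lemma rr_mul_lt_one (τ : ℂ) : rr τ * ‖τ‖ < 1 := by
  have h := abs_lt_cube τ
  have hb : (0:ℝ) < ‖τ‖ ^ 3 + 1 := by positivity
  rw [rr, inv_mul_lt_iff₀ hb, mul_one]
  exact h

lemma rr_lt_ss (τ : ℂ) : rr τ < ss τ := by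
  have h1 : 0 < 1 - rr τ * ‖τ‖ := by linarith [rr_mul_lt_one τ]
  have h2 : (0:ℝ) < ‖τ‖ + 1 := by positivity
  rw [ss]
  have : 0 < (1 - rr τ * ‖τ‖) / (‖τ‖ + 1) := div_pos h1 h2
  linarith

lemma ss_pos (τ : ℂ) : 0 < ss τ := lt_trans (rr_pos τ) (rr_lt_ss τ)

lemma ss_mul_abs_lt_one (τ : ℂ) : ss τ * ‖τ‖ < 1 := by
  have h2 : (0:ℝ) < ‖τ‖ + 1 := by positivity
  have key : ss τ * ‖τ‖ = (rr τ * ‖τ‖ + ‖τ‖) / (‖τ‖ + 1) := by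
    rw [ss]; field_simp; ring
  rw [key, div_lt_one h2]
  linarith [rr_mul_lt_one τ]

lemma hasG (τ : ℂ) :
    HasFPowerSeriesOnBall
      (fun t => ∑' n : ℕ, (1 / ((n : ℂ) + 1) - τ ^ 2 / ((n : ℂ) + 3)) * (-τ * t) ^ (n + 1))
      (G τ) 0 (ENNReal.ofReal (ss τ)) := by
  constructor
  · rw [ENNReal.ofReal]
    apply le_radius_G
    rw [Real.coe_toNNReal _ (ss_pos τ).le]
    exact (ss_mul_abs_lt_one τ).le
  · exact ENNReal.ofReal_pos.2 (ss_pos τ)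
  · intro y hy
    rw [mem_emetric_ball_zero_iff, ← ofReal_norm,
      ENNReal.ofReal_lt_ofReal_iff (ss_pos τ)] at hy
    have hq : ‖τ‖ * ‖y‖ < 1 := by
      have := mul_le_mul_of_nonneg_left hy.le (norm_nonneg τ)
      calc ‖τ‖ * ‖y‖ ≤ ‖τ‖ * ss τ := this
        _ = ss τ * ‖τ‖ := mul_comm _ _
        _ < 1 := ss_mul_abs_lt_one τ
    have hsum : Summable (fun n : ℕ => (D n).eval τ * y ^ n) := by
      apply Summable.of_norm_bounded
        (g := fun n => (1 + ‖τ‖ ^ 2) * (‖τ‖ * ‖y‖) ^ n)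
        ((summable_geometric_of_lt_one (by positivity) hq).mul_left _)
      intro n
      rw [norm_mul, norm_pow]
      calc ‖(D n).eval τ‖ * ‖y‖ ^ n
          ≤ ((1 + ‖τ‖ ^ 2) * ‖τ‖ ^ n) * ‖y‖ ^ n := by
            gcongr
            exact eval_D_norm_le τ n
        _ = (1 + ‖τ‖ ^ 2) * (‖τ‖ * ‖y‖) ^ n := by
            rw [mul_pow]; ring
    have h0 : (fun n => G τ n fun _ => y) = fun n => (D n).eval τ * y ^ n := by
      funext n
      rw [G, FormalMultilinearSeries.ofScalars_apply_eq, smul_eq_mul]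
    rw [h0, zero_add]
    suffices h : (∑' n : ℕ, (1 / ((n : ℂ) + 1) - τ ^ 2 / ((n : ℂ) + 3)) * (-τ * y) ^ (n + 1))
        = ∑' n : ℕ, (D n).eval τ * y ^ n by
      rw [h]
      exact hsum.hasSum
    rw [Summable.tsum_eq_zero_add hsum]
    have hD0 : (D 0).eval τ * y ^ 0 = 0 := by simp [D]
    rw [hD0, zero_add]
    apply tsum_congr
    intro n
    simp only [D, Q, eval_mul, eval_sub, eval_C, eval_pow, eval_neg, eval_X, mul_pow]
    ring

end PFunAux2

namespace PFunAux3
open PFunAux PFunAux2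

lemma applyComposition_one (τ : ℂ) {k : ℕ} (c : Composition k) :
    (G τ).applyComposition c 1 = fun i => (D (c.blocksFun i)).eval τ := by
  funext i
  show G τ (c.blocksFun i) ((1 : Fin k → ℂ) ∘ (c.embedding i)) = _
  have h1 : (1 : Fin k → ℂ) ∘ (c.embedding i) = fun _ => (1 : ℂ) := rfl
  rw [h1, G, FormalMultilinearSeries.ofScalars_apply_eq]
  simp

lemma coeff_comp (k : ℕ) (τ : ℂ) :
    ((NormedSpace.expSeries ℂ ℂ).comp (G τ)).coeff k = (P k).eval τ := by
  rw [FormalMultilinearSeries.coeff, FormalMultilinearSeries.comp,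
    ContinuousMultilinearMap.sum_apply, P, eval_finset_sum]
  apply Finset.sum_congr rfl
  intro c _
  rw [FormalMultilinearSeries.compAlongComposition_apply, applyComposition_one,
    eval_mul, eval_C, eval_prod]
  simp only [NormedSpace.expSeries, ContinuousMultilinearMap.smul_apply,
    ContinuousMultilinearMap.mkPiAlgebraFin_apply, List.prod_ofFn, smul_eq_mul]

end PFunAux3

namespace PFunAux4
open PFunAux PFunAux2 PFunAux3

lemma pFun_eq_coeff (k : ℕ) (τ : ℂ) :
    pFun k τ = ((NormedSpace.expSeries ℂ ℂ).comp (G τ)).coeff k := by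
  have hr_pos : (0:ℝ) < (‖τ‖ ^ 3 + 1)⁻¹ := rr_pos τ
  set R : NNReal := ⟨(‖τ‖ ^ 3 + 1)⁻¹, hr_pos.le⟩ with hR_def
  set g : ℂ → ℂ := fun t =>
    ∑' n : ℕ, (1 / ((n : ℂ) + 1) - τ ^ 2 / ((n : ℂ) + 3)) * (-τ * t) ^ (n + 1) with hg_def
  set F : ℂ → ℂ := fun t => Complex.exp (g t) with hF_def
  have hball : HasFPowerSeriesOnBall g (G τ) 0 (ENNReal.ofReal (ss τ)) := hasG τ
  have hsub : Metric.closedBall (0:ℂ) ((‖τ‖ ^ 3 + 1)⁻¹)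
      ⊆ Metric.eball (0:ℂ) (ENNReal.ofReal (ss τ)) := by
    intro t ht
    rw [Metric.mem_closedBall, dist_zero_right] at ht
    rw [mem_emetric_ball_zero_iff, ← ofReal_norm]
    exact (ENNReal.ofReal_lt_ofReal_iff (ss_pos τ)).2 (lt_of_le_of_lt ht (rr_lt_ss τ))
  have hgd : DifferentiableOn ℂ g (Metric.closedBall 0 ((‖τ‖ ^ 3 + 1)⁻¹)) :=
    fun t ht => ((hball.analyticAt_of_mem (hsub ht)).differentiableAt).differentiableWithinAt
  have hFd : DifferentiableOn ℂ F (Metric.closedBall 0 ((‖τ‖ ^ 3 + 1)⁻¹)) := hgd.cexp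
  have hR_pos : 0 < R := hr_pos
  have hc : HasFPowerSeriesOnBall F (cauchyPowerSeries F 0 R) 0 R :=
    DifferentiableOn.hasFPowerSeriesOnBall hFd hR_pos
  have hg0 : g 0 = 0 := by
    rw [hg_def]
    simp
  have hexp : HasFPowerSeriesAt Complex.exp (NormedSpace.expSeries ℂ ℂ) (g 0) := by
    rw [hg0, Complex.exp_eq_exp_ℂ]
    exact NormedSpace.exp_hasFPowerSeriesAt_zero
  have hcomp : HasFPowerSeriesAt F ((NormedSpace.expSeries ℂ ℂ).comp (G τ)) 0 :=
    hexp.comp hball.hasFPowerSeriesAt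
  have huniq : cauchyPowerSeries F 0 R = (NormedSpace.expSeries ℂ ℂ).comp (G τ) :=
    hc.hasFPowerSeriesAt.eq_formalMultilinearSeries hcomp
  rw [← huniq]
  show pFun k τ = (cauchyPowerSeries F 0 R) k (fun _ => (1:ℂ))
  rw [cauchyPowerSeries_apply, pFun, smul_eq_mul]
  have hint : (fun z : ℂ => ((1:ℂ) / (z - 0)) ^ k • (z - 0)⁻¹ • F z)
      = fun z : ℂ => F z / z ^ (k + 1) := by
    funext z
    simp only [smul_eq_mul, sub_zero, one_div]
    rw [div_eq_mul_inv]
    ring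
  rw [hint]
  rfl

end PFunAux4

namespace PFunAux5
open PFunAux

lemma cast_add_one_ne (m : ℕ) : ((m : ℂ) + 1) ≠ 0 := by
  have : ((m : ℂ) + 1) = ((m + 1 : ℕ) : ℂ) := by push_cast; ring
  rw [this]
  exact Nat.cast_ne_zero.2 (by omega)

lemma cast_add_three_ne (m : ℕ) : ((m : ℂ) + 3) ≠ 0 := by
  have : ((m : ℂ) + 3) = ((m + 3 : ℕ) : ℂ) := by push_cast; ring
  rw [this]
  exact Nat.cast_ne_zero.2 (by omega)

lemma degree_A (m : ℕ) :
    (C (((m : ℂ) + 1)⁻¹) - C (((m : ℂ) + 3)⁻¹) * X ^ 2).degree = 2 := by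
  have heq : C (((m : ℂ) + 1)⁻¹) - C (((m : ℂ) + 3)⁻¹) * X ^ 2
      = C (-((m : ℂ) + 3)⁻¹) * X ^ 2 + C 0 * X + C (((m : ℂ) + 1)⁻¹) := by
    rw [map_neg, map_zero]
    ring
  rw [heq]
  exact degree_quadratic (neg_ne_zero.2 (inv_ne_zero (cast_add_three_ne m)))

lemma degree_negX_pow (n : ℕ) : ((-X : Polynomial ℂ) ^ n).degree = (n : WithBot ℕ) := by
  rw [degree_pow, degree_neg, degree_X, nsmul_eq_mul, mul_one]

lemma degree_Q (m : ℕ) : (Q m).degree = ((m + 3 : ℕ) : WithBot ℕ) := by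
  rw [Q, degree_mul, degree_A, degree_negX_pow]
  push_cast
  ring

lemma D_degree {b : ℕ} (hb : 1 ≤ b) : (D b).degree = ((b + 2 : ℕ) : WithBot ℕ) := by
  cases b with
  | zero => omega
  | succ m =>
      rw [show D (m + 1) = Q m from rfl, degree_Q]

lemma D_ne_zero {b : ℕ} (hb : 1 ≤ b) : D b ≠ 0 := by
  intro h
  have := D_degree hb
  rw [h, degree_zero] at this
  exact absurd this.symm (by simp)

lemma degree_term (k : ℕ) (c : Composition k) :
    (C ((c.length.factorial : ℂ)⁻¹) * ∏ i, D (c.blocksFun i)).degree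
      = ((k + 2 * c.length : ℕ) : WithBot ℕ) := by
  have hfact : ((c.length.factorial : ℂ))⁻¹ ≠ 0 :=
    inv_ne_zero (Nat.cast_ne_zero.2 (Nat.factorial_ne_zero _))
  rw [degree_mul, degree_C hfact, degree_prod, zero_add]
  have hterm : ∀ i : Fin c.length,
      (D (c.blocksFun i)).degree = ((c.blocksFun i + 2 : ℕ) : WithBot ℕ) :=
    fun i => D_degree (c.one_le_blocksFun i)
  rw [Finset.sum_congr rfl fun i _ => hterm i, ← Nat.cast_sum]
  congr 1
  rw [Finset.sum_add_distrib, c.sum_blocksFun, Finset.sum_const, Finset.card_univ,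
    Fintype.card_fin, smul_eq_mul]
  ring

lemma degree_P (k : ℕ) : (P k).degree = ((3 * k : ℕ) : WithBot ℕ) := by
  classical
  have hmem := Finset.mem_univ (Composition.ones k)
  rw [P, ← Finset.add_sum_erase _ _ hmem]
  have hones : (C (((Composition.ones k).length.factorial : ℂ)⁻¹)
      * ∏ i, D ((Composition.ones k).blocksFun i)).degree = ((3 * k : ℕ) : WithBot ℕ) := by
    rw [degree_term]
    congr 1
    rw [Composition.ones_length]
    ring
  rw [degree_add_eq_left_of_degree_lt, hones]
  rw [hones]
  apply lt_of_le_of_lt (degree_sum_le _ _)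
  rw [Finset.sup_lt_iff (by exact WithBot.bot_lt_coe _)]
  intro c hc
  rw [degree_term]
  have hlen : c.length < k := by
    rcases lt_or_eq_of_le c.length_le with h | h
    · exact h
    · exact absurd (Composition.eq_ones_iff_length.mpr h) (Finset.mem_erase.mp hc).1
  exact_mod_cast (by omega : k + 2 * c.length < 3 * k)

lemma coeff_zero_comp (τ : ℂ) :
    ((NormedSpace.expSeries ℂ ℂ).comp (G τ)).coeff 0 = 1 := by
  rw [FormalMultilinearSeries.coeff, FormalMultilinearSeries.comp_coeff_zero'']
  show (NormedSpace.expSeries ℂ ℂ) 0 (fun _ => (1 : ℂ)) = 1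
  rw [NormedSpace.expSeries_apply_eq]
  simp [Nat.factorial]

end PFunAux5

/-- For every `k ≥ 0`, `τ ↦ p_k(τ)` agrees on all of `ℂ` with a polynomial of degree
exactly `3k`; in particular `p_0(τ) = 1` for all `τ`. -/
theorem pFun_is_polynomial :
    (∀ k : ℕ, ∃ P : Polynomial ℂ,
      P.degree = ((3 * k : ℕ) : WithBot ℕ) ∧ ∀ τ : ℂ, pFun k τ = P.eval τ) ∧
    (∀ τ : ℂ, pFun 0 τ = 1) := by
  constructor
  · intro k
    exact ⟨PFunAux.P k, PFunAux5.degree_P k, fun τ => by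
      rw [PFunAux4.pFun_eq_coeff, PFunAux3.coeff_comp]⟩
  · intro τ
    rw [PFunAux4.pFun_eq_coeff, PFunAux5.coeff_zero_comp]
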